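/- Let {J_n} be a sequence of arcs in an L-linearly connected, N-doubling, complete metric space such that J_{n+1} εδ^n-follows J_n and J_{n+1} satisfies: d(x,y) < s·εδ^n implies diam(J_{n+1}[x,y]) < S·εδ^n, where 0 < δ ≤ min{s/(4+2S), 1/10}. Then the sequence {J_n} is Cauchy in the Hausdorff metric, with d_H(J_n, J_{n+m}) ≤ (11/9)εδ^n + Sεδ^{n-1} for all n ≥ 2 and m ≥ 0. -/
import Mathlib


open Metric Set Filter Topology

/-- A metric space is `N`-doubling if every ball can be covered by at most `N`
balls of half the radius. -/
def Doubling (X : Type*) [MetricSpace X] (N : ℕ) : Prop :=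
  ∀ (x : X) (r : ℝ), ∃ t : Finset X, t.card ≤ N ∧
    ball x r ⊆ ⋃ y ∈ t, ball y (r / 2)

/-- A set `S` is `r`-separated if distinct points of `S` are at distance at least `r`. -/
def IsSep {X : Type*} [MetricSpace X] (r : ℝ) (S : Set X) : Prop :=
  S.Pairwise (fun x y => r ≤ dist x y)

/-- `X` is `L`-linearly connected: any two points lie in a compact connected set of
diameter at most `L` times their distance. -/
def LinearlyConnected (X : Type*) [MetricSpace X] (L : ℝ) : Prop :=
  ∀ x y : X, ∃ J : Set X, IsCompact J ∧ IsConnected J ∧ x ∈ J ∧ y ∈ J ∧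
    diam J ≤ L * dist x y

/-- `f` parametrizes an arc: continuous and injective on `[0,1]`. -/
def IsArcParam {X : Type*} [MetricSpace X] (f : ℝ → X) : Prop :=
  ContinuousOn f (Icc 0 1) ∧ InjOn f (Icc 0 1)

/-- The arc parametrized by `g` `ε`-follows the arc parametrized by `f`: there is a
(coarse, not necessarily continuous) reparametrization `p` sending endpoints to
endpoints such that each subarc `g '' uIcc s t` lies in the `ε`-neighborhood of the
corresponding subarc `f '' uIcc (p s) (p t)`. -/
def Follows {X : Type*} [MetricSpace X] (ε : ℝ) (g f : ℝ → X) : Prop :=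
  ∃ p : ℝ → ℝ, MapsTo p (Icc 0 1) (Icc 0 1) ∧ p 0 = 0 ∧ p 1 = 1 ∧
    ∀ s ∈ Icc (0:ℝ) 1, ∀ t ∈ Icc (0:ℝ) 1,
      g '' uIcc s t ⊆ thickening ε (f '' uIcc (p s) (p t))

lemma follows_mono {X : Type*} [MetricSpace X] {e e' : ℝ} {g f : ℝ → X}
    (h : e ≤ e') (hf : Follows e g f) : Follows e' g f := by
  obtain ⟨p, hp, h0, h1, h2⟩ := hf
  exact ⟨p, hp, h0, h1, fun s hs t ht =>
    (h2 s hs t ht).trans (thickening_mono h _)⟩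

lemma follows_trans {X : Type*} [MetricSpace X] {a b : ℝ} {f g h : ℝ → X}
    (hgf : Follows a g f) (hhg : Follows b h g) : Follows (a + b) h f := by
  obtain ⟨p, hp, hp0, hp1, hp2⟩ := hgf
  obtain ⟨q, hq, hq0, hq1, hq2⟩ := hhg
  refine ⟨p ∘ q, hp.comp hq, by simp [hq0, hp0], by simp [hq1, hp1], ?_⟩
  intro s hs t ht
  refine (hq2 s hs t ht).trans ?_
  refine (thickening_subset_of_subset b (hp2 (q s) (hq hs) (q t) (hq ht))).trans ?_
  rw [add_comm]
  exact thickening_thickening_subset b a _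

lemma keyEst {X : Type*} [MetricSpace X] {f g : ℝ → X} {e D c : ℝ}
    (he : 0 < e) (hD : 0 ≤ D)
    (hf : ContinuousOn f (Icc 0 1)) (hg : ContinuousOn g (Icc 0 1))
    (hfol : Follows e g f)
    (h2e : 2 * e < c)
    (hstr : ∀ u ∈ Icc (0:ℝ) 1, ∀ v ∈ Icc (0:ℝ) 1,
      dist (f u) (f v) < c → diam (f '' uIcc u v) ≤ D) :
    hausdorffDist (f '' Icc 0 1) (g '' Icc 0 1) ≤ D + e := by
  obtain ⟨p, hp, hp0, hp1, hp2⟩ := hfol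
  have h01 : (0:ℝ) ∈ Icc (0:ℝ) 1 := by norm_num
  have h11 : (1:ℝ) ∈ Icc (0:ℝ) 1 := by norm_num
  -- pointwise distance of g to f
  have hnear : ∀ t ∈ Icc (0:ℝ) 1, dist (g t) (f (p t)) < e := by
    intro t ht
    have := hp2 t ht t ht ⟨t, by simp, rfl⟩
    rw [mem_thickening_iff] at this
    obtain ⟨z, hz, hdz⟩ := this
    simp only [uIcc_self, image_singleton, mem_singleton_iff] at hz
    rwa [hz] at hdz
  apply hausdorffDist_le_of_infDist (by linarith)
  · -- every point of f '' Icc is close to g '' Icc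
    rintro x ⟨u, hu, rfl⟩
    classical
    set A : Set ℝ := {t | t ∈ Icc (0:ℝ) 1 ∧ p t ≤ u} with hA
    have h0A : (0:ℝ) ∈ A := ⟨h01, by rw [hp0]; exact hu.1⟩
    have hAne : A.Nonempty := ⟨0, h0A⟩
    have hAbdd : BddAbove A := ⟨1, fun t ht => ht.1.2⟩
    set a := sSup A with ha
    have ha0 : 0 ≤ a := le_csSup hAbdd h0A
    have ha1 : a ≤ 1 := csSup_le hAne fun t ht => ht.1.2
    have haI : a ∈ Icc (0:ℝ) 1 := ⟨ha0, ha1⟩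
    -- continuity of g at a within Icc
    have hga := hg a haI
    rw [Metric.continuousWithinAt_iff] at hga
    have hη : 0 < (c - 2 * e) / 4 := by linarith
    obtain ⟨η', hη', hcont⟩ := hga _ hη
    -- choose t ∈ A close to a
    obtain ⟨t, htA, hta⟩ := exists_lt_of_lt_csSup hAne (by linarith : a - η' < sSup A)
    have hta' : t ≤ a := le_csSup hAbdd htA
    have hgt : dist (g t) (g a) < (c - 2 * e) / 4 := by
      apply hcont htA.1
      rw [Real.dist_eq, abs_of_nonpos (by linarith)]
      linarith
    -- choose t' ≥ a with u ≤ p t'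
    have hmain : ∃ t' ∈ Icc (0:ℝ) 1, u ≤ p t' ∧ dist (g t') (g a) < (c - 2*e)/4 := by
      by_cases hpa : u ≤ p a
      · exact ⟨a, haI, hpa, by simp [hη]⟩
      · push_neg at hpa
        have ha1' : a < 1 := by
          rcases lt_or_eq_of_le ha1 with h | h
          · exact h
          · exfalso; rw [h, hp1] at hpa; exact absurd hu.2 (not_le.2 hpa)
        set t' := min 1 (a + η'/2) with ht'
        have hat' : a < t' := by
          apply lt_min ha1'; linarith
        have ht'I : t' ∈ Icc (0:ℝ) 1 := ⟨by linarith, min_le_left _ _⟩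
        have ht'nA : t' ∉ A := fun hmem => absurd (le_csSup hAbdd hmem) (not_le.2 hat')
        have hut' : u ≤ p t' := by
          by_contra hc
          push_neg at hc
          exact ht'nA ⟨ht'I, le_of_lt hc⟩
        refine ⟨t', ht'I, hut', ?_⟩
        apply hcont ht'I
        rw [Real.dist_eq, abs_of_nonneg (by linarith)]
        have : t' ≤ a + η'/2 := min_le_right _ _
        linarith
    obtain ⟨t', ht'I, hut', hgt'⟩ := hmain
    have hptI := hp htA.1
    have hpt'I := hp ht'I
    -- endpoints of the f-subarc are close
    have hd : dist (f (p t)) (f (p t')) < c := by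
      have h1 := hnear t htA.1
      have h2 := hnear t' ht'I
      have h3 : dist (f (p t)) (f (p t')) ≤
          dist (f (p t)) (g t) + dist (g t) (g t') + dist (g t') (f (p t')) :=
        dist_triangle4 _ _ _ _
      have h4 : dist (g t) (g t') ≤ dist (g t) (g a) + dist (g a) (g t') :=
        dist_triangle _ _ _
      rw [dist_comm] at h1
      rw [dist_comm (g a) (g t')] at h4
      linarith
    have hdiam := hstr (p t) hptI (p t') hpt'I hd
    have huMem : u ∈ uIcc (p t) (p t') := by
      rw [mem_uIcc]; exact Or.inl ⟨htA.2, hut'⟩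
    have hptMem : p t ∈ uIcc (p t) (p t') := left_mem_uIcc
    have hbdd : Bornology.IsBounded (f '' uIcc (p t) (p t')) := by
      apply (IsCompact.image_of_continuousOn isCompact_uIcc ?_).isBounded
      apply hf.mono
      rw [← uIcc_of_le (zero_le_one : (0:ℝ) ≤ 1), uIcc_subset_uIcc_iff_mem,
        uIcc_of_le (zero_le_one : (0:ℝ) ≤ 1)]
      exact ⟨hptI, hpt'I⟩
    have hdff : dist (f u) (f (p t)) ≤ D :=
      le_trans (dist_le_diam_of_mem hbdd (mem_image_of_mem f huMem)
        (mem_image_of_mem f hptMem)) hdiam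
    have : dist (f u) (g t) ≤ D + e := by
      calc dist (f u) (g t) ≤ dist (f u) (f (p t)) + dist (f (p t)) (g t) :=
            dist_triangle _ _ _
        _ ≤ D + e := by
            have := hnear t htA.1
            rw [dist_comm (f (p t)) (g t)]
            linarith
    exact le_trans (infDist_le_dist_of_mem (mem_image_of_mem g htA.1)) this
  · -- every point of g '' Icc is close to f '' Icc
    rintro x ⟨t, ht, rfl⟩
    have := hp2 0 h01 1 h11 (mem_image_of_mem g (by rwa [uIcc_of_le zero_le_one]))
    rw [mem_thickening_iff] at this
    obtain ⟨z, hz, hdz⟩ := this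
    rw [hp0, hp1, uIcc_of_le zero_le_one] at hz
    calc infDist (g t) (f '' Icc 0 1) ≤ dist (g t) z := infDist_le_dist_of_mem hz
      _ ≤ D + e := by linarith


/-- The sequence of straightened arcs is Cauchy in the Hausdorff metric, with the
explicit bound `d_H(J n, J (n+m)) ≤ (11/9)εδⁿ + Sεδ^(n-1)` for `n ≥ 2`. -/
theorem stmt16 {X : Type*} [MetricSpace X] [CompleteSpace X] {L : ℝ} (hL : 1 ≤ L)
    (hLC : LinearlyConnected X L) {N : ℕ} (hN : Doubling X N)
    (s S ε δ : ℝ) (hs : 0 < s) (hS : 0 < S) (hε : 0 < ε) (hδ : 0 < δ)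
    (hδ' : δ ≤ min (s / (4 + 2 * S)) (1 / 10))
    (J : ℕ → ℝ → X) (harc : ∀ n, 1 ≤ n → IsArcParam (J n))
    (hfol : ∀ n, 1 ≤ n → Follows (ε * δ ^ n) (J (n + 1)) (J n))
    (hstr : ∀ n, 1 ≤ n → ∀ u ∈ Icc (0:ℝ) 1, ∀ v ∈ Icc (0:ℝ) 1,
      dist (J (n + 1) u) (J (n + 1) v) < s * (ε * δ ^ n) →
        diam (J (n + 1) '' uIcc u v) < S * (ε * δ ^ n)) :
    (∀ n, 2 ≤ n → ∀ m : ℕ,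
      hausdorffDist (J n '' Icc 0 1) (J (n + m) '' Icc 0 1)
        ≤ 11 / 9 * ε * δ ^ n + S * ε * δ ^ (n - 1)) ∧
    ∀ c > (0:ℝ), ∃ n0 : ℕ, ∀ n, n0 ≤ n → ∀ m : ℕ,
      hausdorffDist (J n '' Icc 0 1) (J (n + m) '' Icc 0 1) < c := by
  have hδ1 : δ ≤ 1/10 := le_trans hδ' (min_le_right _ _)
  have hδs : δ ≤ s / (4 + 2*S) := le_trans hδ' (min_le_left _ _)
  have hδlt1 : δ < 1 := by linarith
  have hδS : δ * (4 + 2*S) ≤ s := by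
    rw [le_div_iff₀ (by linarith : (0:ℝ) < 4 + 2*S)] at hδs
    exact hδs
  have key : ∀ n, 2 ≤ n → ∀ m : ℕ,
      hausdorffDist (J n '' Icc 0 1) (J (n + m) '' Icc 0 1)
        ≤ 11 / 9 * ε * δ ^ n + S * ε * δ ^ (n - 1) := by
    intro n hn m
    have hn1 : 1 ≤ n := by omega
    have hpow : (0:ℝ) < δ ^ n := pow_pos hδ n
    have hpow1 : (0:ℝ) < δ ^ (n-1) := pow_pos hδ _
    have hδn : δ ^ n = δ ^ (n-1) * δ := by
      rw [← pow_succ]; congr 1; omega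
    rcases Nat.eq_zero_or_pos m with hm | hm
    · subst hm
      simp only [Nat.add_zero]
      rw [hausdorffDist_self_zero]
      positivity
    · -- iterated follows
      have hfols : ∀ k : ℕ, 1 ≤ k →
          Follows (ε * δ ^ n * ∑ i ∈ Finset.range k, δ ^ i) (J (n + k)) (J n) := by
        intro k hk
        induction k with
        | zero => omega
        | succ k ih =>
          rcases Nat.eq_zero_or_pos k with h0 | h0
          · subst h0
            simpa using hfol n hn1
          · have h1 := ih h0
            have h2 := hfol (n + k) (by omega)
            have heq : ε * δ ^ n * ∑ i ∈ Finset.range (k+1), δ ^ i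
                = ε * δ ^ n * ∑ i ∈ Finset.range k, δ ^ i + ε * δ ^ (n + k) := by
              rw [Finset.sum_range_succ, pow_add]; ring
            rw [heq]
            exact follows_trans h1 h2
      have hsum : ∑ i ∈ Finset.range m, δ ^ i ≤ 10/9 := by
        rw [geom_sum_eq (ne_of_lt hδlt1)]
        rw [div_le_iff_of_neg (by linarith : δ - 1 < 0)]
        have : (0:ℝ) ≤ δ ^ m := le_of_lt (pow_pos hδ m)
        nlinarith
      have hle : ε * δ ^ n * ∑ i ∈ Finset.range m, δ ^ i ≤ 10/9 * ε * δ ^ n := by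
        have h := mul_le_mul_of_nonneg_left hsum (le_of_lt (mul_pos hε hpow))
        linarith
      have hF : Follows (10/9 * ε * δ ^ n) (J (n + m)) (J n) :=
        follows_mono hle (hfols m hm)
      have h2e : 2 * (10/9 * ε * δ ^ n) < s * (ε * δ ^ (n-1)) := by
        rw [hδn]
        nlinarith [mul_pos hε hpow1, mul_pos hδ hS]
      have hstr' : ∀ u ∈ Icc (0:ℝ) 1, ∀ v ∈ Icc (0:ℝ) 1,
          dist (J n u) (J n v) < s * (ε * δ ^ (n-1)) →
            diam (J n '' uIcc u v) ≤ S * (ε * δ ^ (n-1)) := by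
        have hn' : n - 1 + 1 = n := by omega
        have h := hstr (n-1) (by omega)
        rw [hn'] at h
        intro u hu v hv hd
        exact le_of_lt (h u hu v hv hd)
      have hest := keyEst (by positivity) (by positivity)
        (harc n hn1).1 (harc (n+m) (by omega)).1 hF h2e hstr'
      calc hausdorffDist (J n '' Icc 0 1) (J (n + m) '' Icc 0 1)
          ≤ S * (ε * δ ^ (n-1)) + 10/9 * ε * δ ^ n := hest
        _ ≤ 11 / 9 * ε * δ ^ n + S * ε * δ ^ (n - 1) := by nlinarith [mul_pos hε hpow]
  refine ⟨key, ?_⟩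
  intro c hc
  have hten : Tendsto (fun k : ℕ => (11/9 * ε * δ + S * ε) * δ ^ k) atTop (nhds 0) := by
    have h := tendsto_pow_atTop_nhds_zero_of_lt_one (le_of_lt hδ) hδlt1
    simpa using h.const_mul (11/9 * ε * δ + S * ε)
  have hev : ∀ᶠ k in atTop, (11/9 * ε * δ + S * ε) * δ ^ k < c :=
    hten.eventually_lt_const hc
  obtain ⟨n1, hn1⟩ := eventually_atTop.1 hev
  refine ⟨n1 + 2, fun n hn m => ?_⟩
  have hn2 : 2 ≤ n := by omega
  have hδn : δ ^ n = δ * δ ^ (n-1) := by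
    rw [← pow_succ']; congr 1; omega
  calc hausdorffDist (J n '' Icc 0 1) (J (n + m) '' Icc 0 1)
      ≤ 11 / 9 * ε * δ ^ n + S * ε * δ ^ (n - 1) := key n hn2 m
    _ = (11/9 * ε * δ + S * ε) * δ ^ (n-1) := by rw [hδn]; ring
    _ < c := hn1 (n-1) (by omega)
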